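/- Let Φ be a root system in E with a fixed set of positive roots Φ^+. Every special closed subset of Φ is conjugate under the Weyl group W(Φ) to a subset of Φ^+. -/

import Mathlib

open scoped RealInnerProductSpace

/-- The reflection determined by a root `α`: `s_α(x) = x - (2(x,α)/(α,α)) α`. -/
noncomputable def reflectRoot {E : Type*} [NormedAddCommGroup E] [InnerProductSpace ℝ E] (α x : E) : E :=
  x - (2 * ⟪x, α⟫ / ⟪α, α⟫) • α

/-- A root system in a finite-dimensional real inner product space. -/
def IsRootSystem {E : Type*} [NormedAddCommGroup E] [InnerProductSpace ℝ E] (Φ : Set E) : Prop :=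
  Φ.Finite ∧ Submodule.span ℝ Φ = ⊤ ∧ (0 : E) ∉ Φ ∧
    (∀ α ∈ Φ, ∀ t : ℝ, t • α ∈ Φ → t • α = α ∨ t • α = -α) ∧
    (∀ α ∈ Φ, ∀ β ∈ Φ, reflectRoot α β ∈ Φ) ∧
    (∀ α ∈ Φ, ∀ β ∈ Φ, ∃ n : ℤ, 2 * ⟪β, α⟫ / ⟪α, α⟫ = (n : ℝ))

/-- `T` is a closed subset of the root system `Φ`. -/
def IsClosedSub {E : Type*} [AddCommGroup E] (Φ T : Set E) : Prop :=
  T ⊆ Φ ∧ ∀ α ∈ T, ∀ β ∈ T, α + β ∈ Φ → α + β ∈ T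

/-- The symmetric part `T^r = {α ∈ T | -α ∈ T}`. -/
def symmPart {E : Type*} [AddCommGroup E] (T : Set E) : Set E := {α ∈ T | -α ∈ T}

/-- The special part `T^u = {α ∈ T | -α ∉ T}`. -/
def specPart {E : Type*} [AddCommGroup E] (T : Set E) : Set E := {α ∈ T | -α ∉ T}

/-- `T + T`: elements of `T` that are sums of two elements of `T`. -/
def sumSet {E : Type*} [AddCommGroup E] (T : Set E) : Set E :=
  {γ ∈ T | ∃ α ∈ T, ∃ β ∈ T, γ = α + β}

/-- The Weyl group of `Φ`: the subgroup of linear automorphisms of `E` generated by the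
reflections in the roots. -/
def weylGroup {E : Type*} [NormedAddCommGroup E] [InnerProductSpace ℝ E] (Φ : Set E) :
    Subgroup (E ≃ₗ[ℝ] E) :=
  Subgroup.closure {w | ∃ α ∈ Φ, ∀ x, w x = reflectRoot α x}

/-- `Φp` is a set of positive roots of `Φ`. -/
def IsPositiveSystem {E : Type*} [NormedAddCommGroup E] [InnerProductSpace ℝ E]
    (Φ Φp : Set E) : Prop :=
  ∃ f : E →ₗ[ℝ] ℝ, (∀ α ∈ Φ, f α ≠ 0) ∧ Φp = {α ∈ Φ | 0 < f α}

namespace RootsAux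
variable {E : Type*} [NormedAddCommGroup E] [InnerProductSpace ℝ E]

lemma inner_self_pos' {α : E} (h : α ≠ 0) : 0 < ⟪α, α⟫ := by
  rw [real_inner_self_eq_norm_sq]; exact pow_pos (norm_pos_iff.mpr h) 2

lemma reflect_self {α : E} (hα : α ≠ 0) : reflectRoot α α = -α := by
  have hQ : ⟪α, α⟫ ≠ 0 := ne_of_gt (inner_self_pos' hα)
  simp only [reflectRoot]
  rw [mul_div_assoc, div_self hQ, mul_one, two_smul]
  abel

variable {Φ : Set E}

lemma ne_zero_of_mem (hΦ : IsRootSystem Φ) {α : E} (hα : α ∈ Φ) : α ≠ 0 :=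
  fun h => hΦ.2.2.1 (h ▸ hα)

lemma neg_mem (hΦ : IsRootSystem Φ) {α : E} (hα : α ∈ Φ) : -α ∈ Φ := by
  have := hΦ.2.2.2.2.1 α hα α hα
  rwa [reflect_self (ne_zero_of_mem hΦ hα)] at this

/-- Key root-string lemma: negative inner product forces the sum to be a root. -/
lemma add_mem_of_inner_neg (hΦ : IsRootSystem Φ) {α β : E} (hα : α ∈ Φ) (hβ : β ∈ Φ)
    (hin : ⟪α, β⟫ < 0) (hne : α + β ≠ 0) : α + β ∈ Φ := by
  have hα0 := ne_zero_of_mem hΦ hα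
  have hβ0 := ne_zero_of_mem hΦ hβ
  have hQα := inner_self_pos' hα0
  have hQβ := inner_self_pos' hβ0
  obtain ⟨n, hn⟩ := hΦ.2.2.2.2.2 α hα β hβ
  obtain ⟨m, hm⟩ := hΦ.2.2.2.2.2 β hβ α hα
  have hba : ⟪β, α⟫ = ⟪α, β⟫ := real_inner_comm α β
  -- strict Cauchy-Schwarz
  have hcs : ⟪α, β⟫ * ⟪α, β⟫ < ⟪α, α⟫ * ⟪β, β⟫ := by
    rcases lt_or_eq_of_le (real_inner_mul_inner_self_le α β) with h | h
    · exact h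
    · exfalso
      -- equality forces proportionality
      set p : ℝ := ⟪β, α⟫ / ⟪α, α⟫ with hp
      have hz : ⟪β - p • α, β - p • α⟫ = 0 := by
        simp only [inner_sub_left, inner_sub_right, real_inner_smul_left, real_inner_smul_right, hp]
        field_simp
        nlinarith [real_inner_comm α β]
      have hβp : β = p • α := by
        have := inner_self_eq_zero.mp hz
        have := sub_eq_zero.mp this
        exact this.symm ▸ rfl
      rcases hΦ.2.2.2.1 α hα p (hβp ▸ hβ) with h1 | h1
      · rw [← hβp] at h1
        rw [h1] at hin
        linarith
      · rw [← hβp] at h1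
        exact hne (by rw [h1]; abel)
  have hnR : (n : ℝ) < 0 := by
    rw [← hn]
    apply div_neg_of_neg_of_pos _ hQα
    nlinarith
  have hmR : (m : ℝ) < 0 := by
    rw [← hm]
    apply div_neg_of_neg_of_pos _ hQβ
    nlinarith
  have hnm : (n : ℝ) * m < 4 := by
    rw [← hn, ← hm]
    rw [div_mul_div_comm]
    rw [div_lt_iff₀ (by positivity)]
    nlinarith
  have hn' : n ≤ -1 := by
    have : n < 0 := by exact_mod_cast hnR
    omega
  have hm' : m ≤ -1 := by
    have : m < 0 := by exact_mod_cast hmR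
    omega
  have hnm' : n * m ≤ 3 := by
    have : (n * m : ℝ) < 4 := by push_cast; exact hnm
    have : n * m < 4 := by exact_mod_cast this
    omega
  have : n = -1 ∨ m = -1 := by
    by_contra hc
    push_neg at hc
    have h2 : n ≤ -2 := by omega
    have h3 : m ≤ -2 := by omega
    nlinarith
  rcases this with h1 | h1
  · have := hΦ.2.2.2.2.1 α hα β hβ
    have he : reflectRoot α β = α + β := by
      simp only [reflectRoot, hn, h1]
      push_cast
      rw [neg_one_smul]
      abel
    rwa [he] at this
  · have := hΦ.2.2.2.2.1 β hβ α hα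
    have he : reflectRoot β α = α + β := by
      simp only [reflectRoot, hm, h1]
      push_cast
      rw [neg_one_smul]
      abel
    rwa [he] at this

lemma sub_mem_of_inner_pos (hΦ : IsRootSystem Φ) {α β : E} (hα : α ∈ Φ) (hβ : β ∈ Φ)
    (hin : 0 < ⟪α, β⟫) (hne : α ≠ β) : α - β ∈ Φ := by
  have h := add_mem_of_inner_neg hΦ hα (neg_mem hΦ hβ)
    (by rw [inner_neg_right]; linarith) (by
      intro h
      exact hne (by rw [← sub_eq_add_neg] at h; exact sub_eq_zero.mp h))
  simpa [sub_eq_add_neg] using h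


noncomputable def reflectLM (α : E) : E →ₗ[ℝ] E where
  toFun x := reflectRoot α x
  map_add' x y := by
    simp only [reflectRoot, inner_add_left, add_div, mul_add, add_smul]
    abel
  map_smul' r x := by
    simp only [reflectRoot, real_inner_smul_left, RingHom.id_apply, smul_sub, smul_smul]
    rw [mul_div_assoc]
    ring_nf

lemma reflect_invol {α : E} (hα : α ≠ 0) : Function.Involutive (reflectLM α) := by
  intro x
  have hQ : ⟪α, α⟫ ≠ 0 := ne_of_gt (inner_self_pos' hα)
  show reflectRoot α (reflectRoot α x) = x
  simp only [reflectRoot, inner_sub_left, real_inner_smul_left]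
  have h : 2 * (⟪x, α⟫ - 2 * ⟪x, α⟫ / ⟪α, α⟫ * ⟪α, α⟫) / ⟪α, α⟫ = -(2 * ⟪x, α⟫ / ⟪α, α⟫) := by
    field_simp
    ring
  rw [h]
  module

noncomputable def reflectEquiv (α : E) (hα : α ≠ 0) : E ≃ₗ[ℝ] E :=
  LinearEquiv.ofInvolutive (reflectLM α) (reflect_invol hα)

@[simp] lemma reflectEquiv_apply (α : E) (hα : α ≠ 0) (x : E) :
    reflectEquiv α hα x = reflectRoot α x := rfl


lemma inner_multiset_sum (a : E) (M : Multiset E) :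
    ⟪a, M.sum⟫ = (M.map (fun b => ⟪a, b⟫)).sum := by
  induction M using Multiset.induction_on with
  | empty => simp
  | cons x s ih => simp [inner_add_right, ih]

lemma descent (hΦ : IsRootSystem Φ) (hT : IsClosedSub Φ T) (hspec : ∀ α ∈ T, -α ∉ T) :
    ∀ (k : ℕ) (M : Multiset E), M.card = k → M ≠ 0 → (∀ x ∈ M, x ∈ T) →
      ∃ γ ∈ T, ‖γ‖ ^ 2 ≤ ‖M.sum‖ ^ 2 := by
  intro k
  induction k using Nat.strong_induction_on with
  | _ k ih =>
  intro M hcard hM0 hmem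
  classical
  obtain ⟨a, ha⟩ := Multiset.exists_mem_of_ne_zero hM0
  obtain ⟨M₁, rfl⟩ : ∃ M₁, M = a ::ₘ M₁ := ⟨M.erase a, (Multiset.cons_erase ha).symm⟩
  have haT : a ∈ T := hmem a (Multiset.mem_cons_self a M₁)
  by_cases hneg : ∃ b ∈ M₁, ⟪a, b⟫ < 0
  · obtain ⟨b, hb, hab⟩ := hneg
    have hbT : b ∈ T := hmem b (Multiset.mem_cons_of_mem hb)
    have hne : a + b ≠ 0 := by
      intro h
      have : b = -a := by linear_combination (norm := abel) h
      exact hspec a haT (this ▸ hbT)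
    have habT : a + b ∈ T := hT.2 a haT b hbT (add_mem_of_inner_neg hΦ (hT.1 haT) (hT.1 hbT) hab hne)
    set M₂ : Multiset E := (a + b) ::ₘ M₁.erase b with hM₂
    have hcard₂ : M₂.card < k := by
      rw [← hcard]
      simp [hM₂, Multiset.card_erase_of_mem hb]
      have : 0 < M₁.card := Multiset.card_pos.mpr (by rintro rfl; simp at hb)
      omega
    have hsum₂ : M₂.sum = (a ::ₘ M₁).sum := by
      rw [hM₂, Multiset.sum_cons, Multiset.sum_cons]
      conv_rhs => rw [← Multiset.cons_erase hb]
      rw [Multiset.sum_cons]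
      abel
    have hmem₂ : ∀ x ∈ M₂, x ∈ T := by
      intro x hx
      rcases Multiset.mem_cons.mp hx with rfl | hx'
      · exact habT
      · exact hmem x (Multiset.mem_cons_of_mem (Multiset.mem_of_mem_erase hx'))
    obtain ⟨γ, hγT, hγ⟩ := ih M₂.card hcard₂ M₂ rfl
      (Multiset.cons_ne_zero) hmem₂
    exact ⟨γ, hγT, by rwa [hsum₂] at hγ⟩
  · push_neg at hneg
    refine ⟨a, haT, ?_⟩
    rw [Multiset.sum_cons, norm_add_sq_real]
    have h1 : 0 ≤ ⟪a, M₁.sum⟫ := by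
      rw [inner_multiset_sum]
      apply Multiset.sum_nonneg
      intro x hx
      obtain ⟨b, hb, rfl⟩ := Multiset.mem_map.mp hx
      exact hneg b hb
    nlinarith [sq_nonneg ‖M₁.sum‖]

set_option maxHeartbeats 1000000 in
/-- Step A: a special closed subset admits a strictly positive linear functional. -/
lemma exists_pos_functional (hΦ : IsRootSystem Φ) (hT : IsClosedSub Φ T)
    (hspec : ∀ α ∈ T, -α ∉ T) : ∃ g : E →L[ℝ] ℝ, ∀ t ∈ T, 0 < g t := by
  classical
  have hTfin : T.Finite := (hΦ.1).subset hT.1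
  have h0 : (0 : E) ∉ convexHull ℝ T := by
    intro h0
    set tF : Finset E := hTfin.toFinset with htF
    have hcoe : (tF : Set E) = T := hTfin.coe_toFinset
    rw [← hcoe, Finset.convexHull_eq] at h0
    obtain ⟨w, hw0, hw1, hwc⟩ := h0
    have hwsum : ∑ y ∈ tF, w y • y = 0 := by
      have h := Finset.centerMass_eq_of_sum_1 tF id hw1
      rw [hwc] at h
      simpa using h.symm
    have htne : tF.Nonempty := by
      rcases Finset.eq_empty_or_nonempty tF with h | h
      · rw [h] at hw1; simp at hw1
      · exact h
    set μ : ℝ := tF.inf' htne (fun y => ‖y‖) with hμ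
    have hμpos : 0 < μ := by
      rw [hμ, Finset.lt_inf'_iff]
      intro y hy
      have hyT : y ∈ T := by rw [← hcoe]; exact_mod_cast hy
      have : y ≠ 0 := fun h => hΦ.2.2.1 (h ▸ hT.1 hyT)
      exact norm_pos_iff.mpr this
    set C : ℝ := ∑ y ∈ tF, ‖y‖ with hC
    have hC0 : 0 ≤ C := Finset.sum_nonneg fun y _ => norm_nonneg y
    obtain ⟨N, hN⟩ := exists_nat_gt (C / μ)
    have hNpos : (0:ℝ) < (N:ℝ) + 1 := by positivity
    have hCN : C / ((N:ℝ) + 1) < μ := by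
      have hN1 : C / μ < (N:ℝ) + 1 := by linarith
      rw [div_lt_iff₀ hμpos] at hN1
      rw [div_lt_iff₀ hNpos]
      nlinarith
    -- fractional parts
    set fr : ℕ → E → ℝ := fun n y => (n:ℝ) * w y - ⌊(n : ℝ) * w y⌋₊ with hfr
    have hfr0 : ∀ (n : ℕ), ∀ y ∈ tF, 0 ≤ fr n y := by
      intro n y hy
      have hwy : 0 ≤ w y := hw0 y hy
      have h : 0 ≤ (n : ℝ) * w y := by positivity
      simpa [hfr] using Nat.floor_le h
    have hfr1 : ∀ (n : ℕ) (y : E), fr n y < 1 := by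
      intro n y
      have := Nat.lt_floor_add_one ((n : ℝ) * w y)
      simp only [hfr]
      linarith
    -- boxes
    set box : ℕ → ({ y // y ∈ tF } → Fin (N + 1)) := fun n y =>
      ⟨⌊fr n y.1 * ((N:ℝ) + 1)⌋₊, by
        have h0 : 0 ≤ fr n y.1 := hfr0 n y.1 y.2
        have h1 : fr n y.1 < 1 := hfr1 n y.1
        have h2 : fr n y.1 * ((N:ℝ) + 1) < (N:ℝ) + 1 := by nlinarith
        have := (Nat.floor_lt (by positivity)).mpr (by push_cast; linarith : fr n y.1 * ((N:ℝ)+1) < ((N+1 : ℕ) : ℝ))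
        exact this⟩ with hbox
    obtain ⟨bv, hbv⟩ := Finite.exists_infinite_fiber box
    have hS : (box ⁻¹' {bv}).Infinite := Set.infinite_coe_iff.mp hbv
    obtain ⟨n, hn⟩ := hS.nonempty
    obtain ⟨n', hn', hgt⟩ := hS.exists_gt (n + tF.card)
    have hnn' : (n:ℝ) ≤ (n':ℝ) := by
      have : n ≤ n' := le_of_lt (lt_of_le_of_lt (Nat.le_add_right n tF.card) hgt)
      exact_mod_cast this
    -- same box ⇒ close fractional parts
    have hfrdiff : ∀ y ∈ tF, |fr n y - fr n' y| < 1 / ((N:ℝ) + 1) := by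
      intro y hy
      have hbeq : box n ⟨y, hy⟩ = box n' ⟨y, hy⟩ := by
        have h1 : box n = bv := hn
        have h2 : box n' = bv := hn'
        rw [h1, h2]
      have hval : ⌊fr n y * ((N:ℝ) + 1)⌋₊ = ⌊fr n' y * ((N:ℝ) + 1)⌋₊ :=
        congrArg Fin.val hbeq
      have hb1 : (⌊fr n y * ((N:ℝ)+1)⌋₊:ℝ) ≤ fr n y * ((N:ℝ)+1) :=
        Nat.floor_le (by nlinarith [hfr0 n y hy])
      have hb2 : fr n y * ((N:ℝ)+1) < (⌊fr n y * ((N:ℝ)+1)⌋₊:ℝ) + 1 := Nat.lt_floor_add_one _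
      have hb3 : (⌊fr n y * ((N:ℝ)+1)⌋₊:ℝ) ≤ fr n' y * ((N:ℝ)+1) := by
        rw [hval]; exact Nat.floor_le (by nlinarith [hfr0 n' y hy])
      have hb4 : fr n' y * ((N:ℝ)+1) < (⌊fr n y * ((N:ℝ)+1)⌋₊:ℝ) + 1 := by
        rw [hval]; exact Nat.lt_floor_add_one _
      have h5 : |(fr n y - fr n' y) * ((N:ℝ)+1)| < 1 := by
        rw [abs_lt]
        constructor <;> nlinarith
      calc |fr n y - fr n' y| = |(fr n y - fr n' y) * ((N:ℝ)+1)| / ((N:ℝ)+1) := by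
            rw [abs_mul, abs_of_pos hNpos, mul_div_cancel_right₀ _ (ne_of_gt hNpos)]
        _ < 1 / ((N:ℝ)+1) := by gcongr
    -- the integer counts
    set d : E → ℕ := fun y => ⌊(n':ℝ) * w y⌋₊ - ⌊(n:ℝ) * w y⌋₊ with hd
    have hdle : ∀ y ∈ tF, ⌊(n:ℝ) * w y⌋₊ ≤ ⌊(n':ℝ) * w y⌋₊ := by
      intro y hy
      apply Nat.floor_mono
      have := hw0 y hy
      nlinarith
    have hdcast : ∀ y ∈ tF, (d y : ℝ) = ((n':ℝ) - n) * w y + (fr n y - fr n' y) := by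
      intro y hy
      rw [hd]
      push_cast [Nat.cast_sub (hdle y hy)]
      simp only [hfr]
      ring
    set M : Multiset E := tF.val.bind (fun y => Multiset.replicate (d y) y) with hM
    have hMsum : M.sum = ∑ y ∈ tF, (d y : ℝ) • y := by
      rw [hM, Multiset.sum_bind]
      rw [Finset.sum]
      congr 1
      apply Multiset.map_congr rfl
      intro y _
      rw [Multiset.sum_replicate]
      exact (Nat.cast_smul_eq_nsmul ℝ (d y) y).symm
    have hMsum2 : M.sum = ∑ y ∈ tF, (fr n y - fr n' y) • y := by
      rw [hMsum]
      have hsplit : ∀ y ∈ tF, (d y : ℝ) • y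
          = (((n':ℝ) - n) * w y) • y + (fr n y - fr n' y) • y := by
        intro y hy
        rw [hdcast y hy, add_smul]
      rw [Finset.sum_congr rfl hsplit, Finset.sum_add_distrib]
      have h2 : ∑ y ∈ tF, (((n':ℝ) - n) * w y) • y = ((n':ℝ) - n) • ∑ y ∈ tF, w y • y := by
        rw [Finset.smul_sum]
        apply Finset.sum_congr rfl
        intro y _
        rw [mul_smul]
      rw [h2, hwsum, smul_zero, zero_add]
    have hMnorm : ‖M.sum‖ < μ := by
      rw [hMsum2]
      calc ‖∑ y ∈ tF, (fr n y - fr n' y) • y‖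
          ≤ ∑ y ∈ tF, ‖(fr n y - fr n' y) • y‖ := norm_sum_le _ _
        _ = ∑ y ∈ tF, |fr n y - fr n' y| * ‖y‖ := by
            apply Finset.sum_congr rfl
            intro y _
            rw [norm_smul, Real.norm_eq_abs]
        _ ≤ ∑ y ∈ tF, (1 / ((N:ℝ) + 1)) * ‖y‖ := by
            apply Finset.sum_le_sum
            intro y hy
            exact mul_le_mul_of_nonneg_right (le_of_lt (hfrdiff y hy)) (norm_nonneg y)
        _ = C / ((N:ℝ) + 1) := by rw [← Finset.mul_sum, ← hC]; ring
        _ < μ := hCN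
    have hMne : M ≠ 0 := by
      have hcardM : (Multiset.card M : ℝ) = ∑ y ∈ tF, (d y : ℝ) := by
        rw [hM, Multiset.card_bind, Finset.sum]
        push_cast [Multiset.map_map]
        apply congrArg
        apply Multiset.map_congr rfl
        intro y _
        simp
      have hlower : ((n':ℝ) - n) - tF.card ≤ ∑ y ∈ tF, (d y : ℝ) := by
        have : ∀ y ∈ tF, ((n':ℝ) - n) * w y - 1 ≤ (d y : ℝ) := by
          intro y hy
          rw [hdcast y hy]
          have := hfr0 n y hy
          have := hfr1 n' y
          linarith
        calc ((n':ℝ) - n) - tF.card = ∑ y ∈ tF, (((n':ℝ) - n) * w y - 1) := by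
              rw [Finset.sum_sub_distrib, ← Finset.mul_sum, hw1, mul_one]
              simp
          _ ≤ ∑ y ∈ tF, (d y : ℝ) := Finset.sum_le_sum this
      have hpos : (0:ℝ) < Multiset.card M := by
        rw [hcardM]
        have : ((n:ℝ)) + tF.card < (n':ℝ) := by exact_mod_cast hgt
        linarith
      intro h
      rw [h] at hpos
      simp at hpos
    have hMmem : ∀ x ∈ M, x ∈ T := by
      intro x hx
      rw [hM] at hx
      obtain ⟨y, hy, hx'⟩ := Multiset.mem_bind.mp hx
      have : x = y := Multiset.eq_of_mem_replicate hx'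
      subst this
      rw [← hcoe]
      exact_mod_cast hy
    obtain ⟨γ, hγT, hγ⟩ := descent hΦ hT hspec (Multiset.card M) M rfl hMne hMmem
    have hμγ : μ ≤ ‖γ‖ := by
      apply Finset.inf'_le
      rw [htF, Set.Finite.mem_toFinset]
      exact hγT
    have h1 : ‖M.sum‖ < ‖γ‖ := lt_of_lt_of_le hMnorm hμγ
    have h2 : ‖M.sum‖ ^ 2 < ‖γ‖ ^ 2 := by
      apply pow_lt_pow_left₀ h1 (norm_nonneg _)
      norm_num
    linarith
  obtain ⟨g, u, hg0, hgT⟩ := geometric_hahn_banach_point_closed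
    (convex_convexHull ℝ T) ((hTfin.isCompact_convexHull (𝕜 := ℝ)).isClosed) h0
  refine ⟨g, fun t ht => ?_⟩
  have := hgT t (subset_convexHull ℝ T ht)
  simp only [map_zero] at hg0
  linarith

section PosSystem
variable (Φ) (f : E →ₗ[ℝ] ℝ)

/-- positive roots w.r.t. `f` -/
def PosR : Set E := {α ∈ Φ | 0 < f α}

/-- indecomposable positive roots -/
def Indec : Set E := {α ∈ PosR Φ f | ¬ ∃ β ∈ PosR Φ f, ∃ γ ∈ PosR Φ f, α = β + γ}

end PosSystem

variable {f : E →ₗ[ℝ] ℝ}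

lemma neg_of_not_pos (hΦ : IsRootSystem Φ) (hf : ∀ α ∈ Φ, f α ≠ 0) {α : E}
    (hα : α ∈ Φ) (h : α ∉ PosR Φ f) : -α ∈ PosR Φ f := by
  refine ⟨neg_mem hΦ hα, ?_⟩
  rw [map_neg]
  rcases lt_trichotomy (f α) 0 with h1 | h1 | h1
  · linarith
  · exact absurd h1 (hf α hα)
  · exact absurd ⟨hα, h1⟩ h

/-- Every positive root is "generated" by indecomposables: a functional nonneg on
indecomposables is nonneg on all positive roots. -/
lemma nonneg_on_pos (hΦ : IsRootSystem Φ) (g : E →ₗ[ℝ] ℝ)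
    (hg : ∀ δ ∈ Indec Φ f, 0 ≤ g δ) : ∀ β ∈ PosR Φ f, 0 ≤ g β := by
  classical
  set m : E → ℕ := fun β => ((hΦ.1.toFinset.filter (fun γ => 0 < f γ ∧ f γ < f β)).card) with hm
  suffices h : ∀ (k : ℕ), ∀ β ∈ PosR Φ f, m β ≤ k → 0 ≤ g β by
    intro β hβ
    exact h (m β) β hβ le_rfl
  intro k
  induction k with
  | zero =>
    intro β hβ hk
    by_cases hβi : β ∈ Indec Φ f
    · exact hg β hβi
    · exfalso
      obtain ⟨γ₁, hγ₁, γ₂, hγ₂, hsum⟩ := by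
        simpa [Indec, hβ] using hβi
      have : γ₁ ∈ hΦ.1.toFinset.filter (fun γ => 0 < f γ ∧ f γ < f β) := by
        rw [Finset.mem_filter, Set.Finite.mem_toFinset]
        refine ⟨hγ₁.1, hγ₁.2, ?_⟩
        have : f β = f γ₁ + f γ₂ := by rw [hsum, map_add]
        have := hγ₂.2
        linarith
      have : 0 < m β := Finset.card_pos.mpr ⟨γ₁, this⟩
      omega
  | succ k ih =>
    intro β hβ hk
    by_cases hβi : β ∈ Indec Φ f
    · exact hg β hβi
    · obtain ⟨γ₁, hγ₁, γ₂, hγ₂, hsum⟩ := by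
        simpa [Indec, hβ] using hβi
      have hfβ : f β = f γ₁ + f γ₂ := by rw [hsum, map_add]
      have key : ∀ γ' ∈ PosR Φ f, f γ' < f β → m γ' < m β := by
        intro γ' hγ' hlt
        apply Finset.card_lt_card
        rw [Finset.ssubset_iff_of_subset]
        · exact ⟨γ', by
            rw [Finset.mem_filter, Set.Finite.mem_toFinset]
            exact ⟨hγ'.1, hγ'.2, hlt⟩, by
            rw [Finset.mem_filter]
            rintro ⟨-, -, h2⟩
            linarith⟩
        · intro x hx
          rw [Finset.mem_filter] at hx ⊢
          exact ⟨hx.1, hx.2.1, by linarith [hx.2.2]⟩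
      have h1 : 0 ≤ g γ₁ := ih γ₁ hγ₁ (by
        have := key γ₁ hγ₁ (by linarith [hγ₂.2])
        omega)
      have h2 : 0 ≤ g γ₂ := ih γ₂ hγ₂ (by
        have := key γ₂ hγ₂ (by linarith [hγ₁.2])
        omega)
      have : g β = g γ₁ + g γ₂ := by rw [hsum, map_add]
      linarith


/-- Key step for `no_nat_smul_decomp`. -/
lemma key_step (hΦ : IsRootSystem Φ) (hf : ∀ α ∈ Φ, f α ≠ 0) {α β γ : E} {n : ℕ}
    (hα : α ∈ Indec Φ f) (hβ : β ∈ PosR Φ f) (hγ : γ ∈ PosR Φ f)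
    (hβα : β ≠ α) (hγα : γ ≠ α) (hip : 0 < ⟪β, α⟫)
    (hrel : (n:ℝ) • α = β + γ) (hn2 : 2 ≤ n)
    (IH : ∀ m : ℕ, m < n → ∀ β' ∈ PosR Φ f, ∀ γ' ∈ PosR Φ f,
      β' ≠ α → γ' ≠ α → (m:ℝ) • α = β' + γ' → False) : False := by
  have hαΦ : α ∈ Φ := hα.1.1
  have hβΦ : β ∈ Φ := hβ.1
  have hα0 : α ≠ 0 := ne_zero_of_mem hΦ hαΦ
  have hβsub : β - α ∈ Φ := sub_mem_of_inner_pos hΦ hβΦ hαΦ hip hβα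
  by_cases hp : 0 < f (β - α)
  · -- reduce n
    have hβ' : β - α ∈ PosR Φ f := ⟨hβsub, hp⟩
    have hβ'α : β - α ≠ α := by
      intro h
      have hβ2 : β = (2:ℝ) • α := by
        rw [two_smul]
        rw [sub_eq_iff_eq_add] at h
        rw [h]
      rcases hΦ.2.2.2.1 α hαΦ 2 (hβ2 ▸ hβΦ) with h1 | h1
      · have : α = 0 := by
          have : (2:ℝ) • α - α = 0 := by rw [h1]; abel
          have h2 : (1:ℝ) • α = 0 := by
            rw [← this]; module
          simpa using h2
        exact hα0 this
      · have : α = 0 := by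
          have h2 : (3:ℝ) • α = 0 := by
            rw [show (3:ℝ) = 2 + 1 by norm_num, add_smul, one_smul, h1]
            abel
          rcases smul_eq_zero.mp h2 with h3 | h3
          · norm_num at h3
          · exact h3
        exact hα0 this
    apply IH (n - 1) (by omega) (β - α) hβ' γ hγ hβ'α hγα
    have : ((n - 1 : ℕ) : ℝ) = (n : ℝ) - 1 := by
      have : (1:ℕ) ≤ n := by omega
      push_cast [Nat.cast_sub this]
      ring
    rw [this, sub_smul, hrel, one_smul]
    abel
  · -- α decomposes, contradiction
    have hneg : f (β - α) < 0 := by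
      rcases lt_trichotomy (f (β - α)) 0 with h | h | h
      · exact h
      · exact absurd h (hf _ hβsub)
      · exact absurd h hp
    have hab : α - β ∈ PosR Φ f := by
      refine ⟨by simpa [neg_sub] using neg_mem hΦ hβsub, ?_⟩
      have : f (α - β) = -(f (β - α)) := by rw [← map_neg]; congr 1; abel
      rw [this]; linarith
    exact hα.2 ⟨β, hβ, α - β, hab, by abel⟩

lemma no_nat_smul_decomp (hΦ : IsRootSystem Φ) (hf : ∀ α ∈ Φ, f α ≠ 0) :
    ∀ (n : ℕ), ∀ α ∈ Indec Φ f, ∀ β ∈ PosR Φ f, ∀ γ ∈ PosR Φ f,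
      β ≠ α → γ ≠ α → (n:ℝ) • α = β + γ → False := by
  intro n
  induction n using Nat.strong_induction_on with
  | _ n ih =>
  intro α hα β hβ γ hγ hβα hγα hrel
  match n, hrel with
  | 0, hrel =>
    have : f β + f γ = 0 := by
      have := congrArg f hrel
      simpa using this.symm
    linarith [hβ.2, hγ.2]
  | 1, hrel =>
    have hrel' : α = β + γ := by
      rw [← hrel]
      norm_num
    exact hα.2 ⟨β, hβ, γ, hγ, hrel'⟩
  | (k+2), hrel =>
    have hαΦ : α ∈ Φ := hα.1.1
    have hα0 : α ≠ 0 := ne_zero_of_mem hΦ hαΦ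
    have hQ : 0 < ⟪α, α⟫ := inner_self_pos' hα0
    have hsum : ⟪β, α⟫ + ⟪γ, α⟫ = ((k:ℝ)+2) * ⟪α, α⟫ := by
      rw [← inner_add_left, ← hrel, real_inner_smul_left]
      push_cast
      ring
    have hpos : 0 < ⟪β, α⟫ ∨ 0 < ⟪γ, α⟫ := by
      by_contra h
      push_neg at h
      nlinarith [h.1, h.2]
    have IH : ∀ m : ℕ, m < k + 2 → ∀ β' ∈ PosR Φ f, ∀ γ' ∈ PosR Φ f,
        β' ≠ α → γ' ≠ α → (m:ℝ) • α = β' + γ' → False := by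
      intro m hm β' hβ' γ' hγ' h1 h2 h3
      exact ih m hm α hα β' hβ' γ' hγ' h1 h2 h3
    rcases hpos with h | h
    · exact key_step hΦ hf hα hβ hγ hβα hγα h hrel (by omega) IH
    · exact key_step hΦ hf hα hγ hβ hγα hβα h (by rw [hrel]; abel) (by omega) IH

/-- Simple reflections permute the other positive roots. -/
lemma reflect_pos (hΦ : IsRootSystem Φ) (hf : ∀ α ∈ Φ, f α ≠ 0) {δ β : E}
    (hδ : δ ∈ Indec Φ f) (hβ : β ∈ PosR Φ f) (hne : β ≠ δ) :
    reflectRoot δ β ∈ PosR Φ f := by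
  have hδΦ : δ ∈ Φ := hδ.1.1
  have hβΦ : β ∈ Φ := hβ.1
  have hδ0 : δ ≠ 0 := ne_zero_of_mem hΦ hδΦ
  have hrΦ : reflectRoot δ β ∈ Φ := hΦ.2.2.2.2.1 δ hδΦ β hβΦ
  by_contra hr
  have hγ : -(reflectRoot δ β) ∈ PosR Φ f := neg_of_not_pos hΦ hf hrΦ (fun h => hr h)
  obtain ⟨nz, hnz⟩ := hΦ.2.2.2.2.2 δ hδΦ β hβΦ
  have hrel0 : reflectRoot δ β = β - (nz:ℝ) • δ := by
    rw [reflectRoot, hnz]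
  set γ : E := -(reflectRoot δ β) with hγdef
  have hrel : (nz:ℝ) • δ = β + γ := by
    rw [hγdef, hrel0]
    abel
  have hfrel : (nz:ℝ) * f δ = f β + f γ := by
    have := congrArg f hrel
    simpa using this
  have hnzpos : 0 < (nz:ℝ) := by
    have h1 := hβ.2
    have h2 := hγ.2
    have h3 := hδ.1.2
    nlinarith
  have hγδ : γ ≠ δ := by
    intro h
    have hβeq : β = ((nz:ℝ) - 1) • δ := by
      have : β = (nz:ℝ) • δ - γ := by rw [hrel]; abel
      rw [this, h, sub_smul, one_smul]
    rcases hΦ.2.2.2.1 δ hδΦ ((nz:ℝ) - 1) (hβeq ▸ hβΦ) with h1 | h1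
    · rw [← hβeq] at h1
      exact hne h1
    · rw [← hβeq] at h1
      have : f β = -(f δ) := by rw [h1, map_neg]
      have := hβ.2
      have := hδ.1.2
      linarith
  have hcast : ((nz.toNat : ℕ) : ℝ) = (nz : ℝ) := by
    have h0 : 0 < nz := by exact_mod_cast hnzpos
    have h1 : (nz.toNat : ℤ) = nz := Int.toNat_of_nonneg (le_of_lt h0)
    exact_mod_cast congrArg (fun z : ℤ => (z:ℝ)) h1
  exact no_nat_smul_decomp hΦ hf nz.toNat δ hδ β hβ γ hγ hne hγδ (by rw [hcast]; exact hrel)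


set_option maxHeartbeats 1000000 in
lemma main_induction (hΦ : IsRootSystem Φ) (hf : ∀ α ∈ Φ, f α ≠ 0) :
    ∀ (k : ℕ) (T : Set E), T ⊆ Φ → ∀ (g : E →ₗ[ℝ] ℝ), (∀ t ∈ T, 0 < g t) →
      (hΦ.1.toFinset.filter (fun γ => 0 < f γ ∧ g γ < 0)).card ≤ k →
      ∃ w ∈ weylGroup Φ, ⇑w '' T ⊆ PosR Φ f := by
  classical
  intro k
  induction k with
  | zero =>
    intro T hTΦ g hg hcard
    refine ⟨1, one_mem _, ?_⟩
    rw [LinearEquiv.coe_one, Set.image_id]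
    -- show T ⊆ PosR
    intro β hβ
    by_contra hβp
    have hβΦ : β ∈ Φ := hTΦ hβ
    have hnegβ : -β ∈ PosR Φ f := neg_of_not_pos hΦ hf hβΦ hβp
    -- find an indecomposable with g < 0
    have hδ : ∃ δ ∈ Indec Φ f, g δ < 0 := by
      by_contra h
      push_neg at h
      have := nonneg_on_pos hΦ g (fun δ hδ => (h δ hδ)) (-β) hnegβ
      rw [map_neg] at this
      linarith [hg β hβ]
    obtain ⟨δ, hδI, hδg⟩ := hδ
    have : δ ∈ hΦ.1.toFinset.filter (fun γ => 0 < f γ ∧ g γ < 0) := by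
      rw [Finset.mem_filter, Set.Finite.mem_toFinset]
      exact ⟨hδI.1.1, hδI.1.2, hδg⟩
    have := Finset.card_pos.mpr ⟨δ, this⟩
    omega
  | succ k ih =>
    intro T hTΦ g hg hcard
    by_cases hsub : T ⊆ PosR Φ f
    · refine ⟨1, one_mem _, ?_⟩
      rw [LinearEquiv.coe_one, Set.image_id]
      exact hsub
    · obtain ⟨β, hβT, hβp⟩ := Set.not_subset.mp hsub
      have hβΦ : β ∈ Φ := hTΦ hβT
      have hnegβ : -β ∈ PosR Φ f := neg_of_not_pos hΦ hf hβΦ hβp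
      have hδ : ∃ δ ∈ Indec Φ f, g δ < 0 := by
        by_contra h
        push_neg at h
        have := nonneg_on_pos hΦ g (fun δ hδ => (h δ hδ)) (-β) hnegβ
        rw [map_neg] at this
        linarith [hg β hβT]
      obtain ⟨δ, hδI, hδg⟩ := hδ
      have hδΦ : δ ∈ Φ := hδI.1.1
      have hδ0 : δ ≠ 0 := ne_zero_of_mem hΦ hδΦ
      set s : E ≃ₗ[ℝ] E := reflectEquiv δ hδ0 with hs
      have hsapp : ∀ x, s x = reflectRoot δ x := reflectEquiv_apply δ hδ0
      have hsinvol : ∀ x, s (s x) = x := by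
        intro x
        rw [hsapp, hsapp]
        exact reflect_invol hδ0 x
      have hsΦ : ∀ x ∈ Φ, s x ∈ Φ := by
        intro x hx
        rw [hsapp]
        exact hΦ.2.2.2.2.1 δ hδΦ x hx
      -- new data
      set T' : Set E := ⇑s '' T with hT'
      have hT'Φ : T' ⊆ Φ := by
        rintro _ ⟨t, ht, rfl⟩
        exact hsΦ t (hTΦ ht)
      set g' : E →ₗ[ℝ] ℝ := g.comp (s : E →ₗ[ℝ] E) with hg'
      have hg'app : ∀ x, g' x = g (s x) := fun x => rfl
      have hg'pos : ∀ t ∈ T', 0 < g' t := by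
        rintro _ ⟨t, ht, rfl⟩
        rw [hg'app, hsinvol]
        exact hg t ht
      -- cardinality decreases
      have hcount : (hΦ.1.toFinset.filter (fun γ => 0 < f γ ∧ g' γ < 0)).card ≤ k := by
        have hδS : δ ∈ hΦ.1.toFinset.filter (fun γ => 0 < f γ ∧ g γ < 0) := by
          rw [Finset.mem_filter, Set.Finite.mem_toFinset]
          exact ⟨hδΦ, hδI.1.2, hδg⟩
        have hmap : ∀ γ ∈ hΦ.1.toFinset.filter (fun γ => 0 < f γ ∧ g' γ < 0),
            s γ ∈ (hΦ.1.toFinset.filter (fun γ => 0 < f γ ∧ g γ < 0)).erase δ := by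
          intro γ hγ
          rw [Finset.mem_filter, Set.Finite.mem_toFinset] at hγ
          obtain ⟨hγΦ, hγf, hγg⟩ := hγ
          rw [hg'app] at hγg
          have hγδ : γ ≠ δ := by
            intro h
            subst h
            rw [hsapp, reflect_self hδ0, map_neg] at hγg
            linarith
          have hsγ : s γ ∈ PosR Φ f := by
            rw [hsapp]
            exact reflect_pos hΦ hf hδI ⟨hγΦ, hγf⟩ hγδ
          have hsγδ : s γ ≠ δ := by
            intro h
            have : γ = s δ := by
              rw [← h, hsinvol]
            rw [hsapp, reflect_self hδ0] at this
            subst this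
            rw [map_neg] at hγf
            linarith [hδI.1.2]
          rw [Finset.mem_erase, Finset.mem_filter, Set.Finite.mem_toFinset]
          exact ⟨hsγδ, hsγ.1, hsγ.2, hγg⟩
        have hinj : Set.InjOn ⇑s ↑(hΦ.1.toFinset.filter (fun γ => 0 < f γ ∧ g' γ < 0)) :=
          (s.injective).injOn
        have := Finset.card_le_card_of_injOn ⇑s hmap hinj
        rw [Finset.card_erase_of_mem hδS] at this
        omega
      obtain ⟨w', hw'W, hw'⟩ := ih T' hT'Φ g' hg'pos hcount
      refine ⟨w' * s, mul_mem hw'W (Subgroup.subset_closure ⟨δ, hδΦ, hsapp⟩), ?_⟩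
      have : ⇑(w' * s) '' T = ⇑w' '' (⇑s '' T) := by
        rw [Set.image_image]
        rfl
      rw [this]
      exact hw'

end RootsAux

/-- Every special closed subset of `Φ` is conjugate under the Weyl group
to a subset of a fixed set of positive roots `Φp`. -/
theorem special_closed_conjugate_to_subset_of_positives {E : Type*} [NormedAddCommGroup E]
    [InnerProductSpace ℝ E] [FiniteDimensional ℝ E] (Φ Φp T : Set E)
    (hΦ : IsRootSystem Φ) (hΦp : IsPositiveSystem Φ Φp)
    (hT : IsClosedSub Φ T) (hspec : ∀ α ∈ T, -α ∉ T) :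
    ∃ w ∈ weylGroup Φ, ⇑w '' T ⊆ Φp := by
  obtain ⟨f, hf, hΦpEq⟩ := hΦp
  obtain ⟨g, hg⟩ := RootsAux.exists_pos_functional hΦ hT hspec
  obtain ⟨w, hwW, hw⟩ := RootsAux.main_induction hΦ hf
    ((hΦ.1.toFinset.filter (fun γ => 0 < f γ ∧ g.toLinearMap γ < 0)).card) T hT.1
    g.toLinearMap (fun t ht => hg t ht) le_rfl
  refine ⟨w, hwW, ?_⟩
  have hpos : RootsAux.PosR Φ f = Φp := by rw [hΦpEq]; rfl
  rw [← hpos]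
  exact hw
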